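/- arXiv:math/0006051 — 4 statements merged into one kernel-verified Lean document; each statement's English description precedes it below -/
import Mathlib

section
/- Let n ≥ 2 and define rational numbers a_0 = -n and a_k = (-1)^k/(k-1)! + (-1)^{k+1} n/k! for 1 ≤ k ≤ n-1, with a_n = 0. Then a_0 + a_1 = -1 and for every l with 1 ≤ l ≤ n-1 one has ∑_{k=0}^{l} (a_k + (k+1) a_{k+1}) / (l-k)! = 0. -/
/-- For `n ≥ 2` and `a_0 = -n`, `a_k = (-1)^k/(k-1)! + (-1)^{k+1} n/k!` for
`1 ≤ k ≤ n-1`, `a_k = 0` for `k ≥ n`: one has `a_0 + a_1 = -1` and for all `1 ≤ l ≤ n-1`,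
`∑_{k=0}^{l} (a_k + (k+1) a_{k+1})/(l-k)! = 0`. -/
theorem coefficients_satisfy_system (n : ℕ) (hn : 2 ≤ n)
    (a : ℕ → ℚ)
    (ha : a = fun k => if k = 0 then -(n : ℚ)
      else if k ≤ n - 1 then
        (-1) ^ k / ((k - 1).factorial : ℚ) + (-1) ^ (k + 1) * (n : ℚ) / (k.factorial : ℚ)
      else 0) :
    a 0 + a 1 = -1 ∧
      ∀ l : ℕ, 1 ≤ l → l ≤ n - 1 →
        ∑ k ∈ Finset.range (l + 1),
          (a k + ((k : ℚ) + 1) * a (k + 1)) / (((l - k).factorial : ℚ)) = 0 := by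
  have ha0 : a 0 = -(n : ℚ) := by simp [ha]
  have hak : ∀ k : ℕ, 1 ≤ k → k ≤ n - 1 →
      a k = (-1) ^ k / ((k - 1).factorial : ℚ) + (-1) ^ (k + 1) * (n : ℚ) / (k.factorial : ℚ) := by
    intro k h1 h2
    rw [ha]
    simp only []
    rw [if_neg (by omega), if_pos h2]
  have hbig : ∀ k : ℕ, n - 1 < k → a k = 0 := by
    intro k hk
    rw [ha]
    simp only []
    rw [if_neg (by omega), if_neg (by omega)]
  -- the key computation
  have key : ∀ k : ℕ, k ≤ n - 1 →
      a k + ((k : ℚ) + 1) * a (k + 1) = (-1) ^ (k + 1) / (k.factorial : ℚ) := by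
    intro k hk
    rcases Nat.eq_zero_or_pos k with hk0 | hk1
    · subst hk0
      rw [ha0, hak 1 le_rfl (by omega)]
      simp [Nat.factorial]
    · -- k ≥ 1
      rcases lt_or_eq_of_le hk with hlt | heq
      · -- 1 ≤ k ≤ n-2, so k+1 ≤ n-1
        obtain ⟨m, rfl⟩ : ∃ m, k = m + 1 := ⟨k - 1, by omega⟩
        rw [hak (m+1) (by omega) (by omega), hak (m+2) (by omega) (by omega)]
        have hfac1 : ((m+1).factorial : ℚ) = (m + 1) * (m.factorial : ℚ) := by
          push_cast [Nat.factorial_succ]; ring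
        have hfac2 : ((m+2).factorial : ℚ) = (m + 2) * ((m + 1) * (m.factorial : ℚ)) := by
          push_cast [Nat.factorial_succ]; ring
        have hm : (m.factorial : ℚ) ≠ 0 := by positivity
        simp only [show m + 1 - 1 = m from rfl, show m + 2 - 1 = m + 1 from rfl,
          hfac1, hfac2]
        have h1 : ((m:ℚ) + 1) ≠ 0 := by positivity
        have h2 : ((m:ℚ) + 2) ≠ 0 := by positivity
        field_simp
        push_cast; ring
      · -- k = n - 1
        have hk1n : n - 1 < k + 1 := by omega
        rw [hbig (k+1) hk1n, hak k hk1 hk]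
        obtain ⟨m, rfl⟩ : ∃ m, k = m + 1 := ⟨k - 1, by omega⟩
        have hfac1 : ((m+1).factorial : ℚ) = (m + 1) * (m.factorial : ℚ) := by
          push_cast [Nat.factorial_succ]; ring
        have hm : (m.factorial : ℚ) ≠ 0 := by positivity
        have h1 : ((m:ℚ) + 1) ≠ 0 := by positivity
        have hn' : (n : ℚ) = (m : ℚ) + 2 := by
          have : n = m + 2 := by omega
          rw [this]; push_cast; ring
        simp only [show m + 1 - 1 = m from rfl, hfac1, hn']
        field_simp
        ring
  constructor
  · have := key 0 (by omega)
    simpa using this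
  · intro l hl1 hl2
    have hterm : ∀ k ∈ Finset.range (l + 1),
        (a k + ((k : ℚ) + 1) * a (k + 1)) / (((l - k).factorial : ℚ)) =
          (-1) ^ (k + 1) * (l.choose k : ℚ) / (l.factorial : ℚ) := by
      intro k hk
      rw [Finset.mem_range] at hk
      have hkl : k ≤ l := by omega
      rw [key k (by omega)]
      have hcf : (l.choose k : ℚ) * (k.factorial : ℚ) * ((l - k).factorial : ℚ)
          = (l.factorial : ℚ) := by
        exact_mod_cast congrArg (Nat.cast (R := ℚ))
          (Nat.choose_mul_factorial_mul_factorial hkl)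
      have h1 : (k.factorial : ℚ) ≠ 0 := by positivity
      have h2 : ((l - k).factorial : ℚ) ≠ 0 := by positivity
      have h3 : (l.factorial : ℚ) ≠ 0 := by positivity
      field_simp
      linear_combination (-1:ℚ) * hcf
    rw [Finset.sum_congr rfl hterm]
    have halt : ∑ i ∈ Finset.range (l + 1), (-1 : ℤ) ^ i * (l.choose i : ℤ) = 0 :=
      Int.alternating_sum_range_choose_of_ne (by omega)
    have haltQ : ∑ i ∈ Finset.range (l + 1), (-1 : ℚ) ^ i * (l.choose i : ℚ) = 0 := by
      exact_mod_cast halt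
    calc ∑ k ∈ Finset.range (l + 1), (-1) ^ (k + 1) * (l.choose k : ℚ) / (l.factorial : ℚ)
        = (∑ k ∈ Finset.range (l + 1), -((-1 : ℚ) ^ k * (l.choose k : ℚ))) / (l.factorial : ℚ) := by
          rw [← Finset.sum_div]
          congr 1
          apply Finset.sum_congr rfl
          intro k _
          ring
      _ = 0 := by rw [Finset.sum_neg_distrib, haltQ]; simp
end

section
/- Let n ≥ 2. Suppose (a_k)_{k=0}^{n-1} are rational numbers, with the convention a_n = 0, satisfying a_0 + a_1 = -1 and ∑_{k=0}^{l} (a_k + (k+1)a_{k+1})/(l-k)! = 0 for all 1 ≤ l ≤ n-1. Then necessarily a_0 = -n and a_k = (-1)^k/(k-1)! + (-1)^{k+1} n/k! for 1 ≤ k ≤ n-1. -/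
lemma key_alt (l : ℕ) (hl : 1 ≤ l) :
    ∑ k ∈ Finset.range (l+1),
      (-1:ℚ)^(k+1) / ((k.factorial : ℚ) * ((l-k).factorial : ℚ)) = 0 := by
  have h := Int.alternating_sum_range_choose (n := l)
  rw [if_neg (by omega)] at h
  have h' : ∑ k ∈ Finset.range (l+1), (-1:ℚ)^k * (l.choose k : ℚ) = 0 := by
    have := congrArg (fun z : ℤ => (z : ℚ)) h
    push_cast at this
    simpa using this
  have hrw : ∀ k ∈ Finset.range (l+1),
      (-1:ℚ)^(k+1) / ((k.factorial : ℚ) * ((l-k).factorial : ℚ))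
        = (-(l.factorial:ℚ)⁻¹) * ((-1:ℚ)^k * (l.choose k : ℚ)) := by
    intro k hk
    have hkl : k ≤ l := Nat.lt_succ_iff.mp (Finset.mem_range.mp hk)
    rw [Nat.cast_choose ℚ hkl]
    have hk0 : (k.factorial:ℚ) ≠ 0 := Nat.cast_ne_zero.mpr k.factorial_ne_zero
    have hl0 : (l.factorial:ℚ) ≠ 0 := Nat.cast_ne_zero.mpr l.factorial_ne_zero
    have hlk0 : ((l-k).factorial:ℚ) ≠ 0 := Nat.cast_ne_zero.mpr (l-k).factorial_ne_zero
    field_simp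
    ring
  rw [Finset.sum_congr rfl hrw, ← Finset.mul_sum, h', mul_zero]

/-- uniqueness: For `n ≥ 2`, if rationals `a_0, …, a_{n-1}` (with `a_n = 0`)
satisfy `a_0 + a_1 = -1` and `∑_{k=0}^{l} (a_k + (k+1)a_{k+1})/(l-k)! = 0` for all
`1 ≤ l ≤ n-1`, then `a_0 = -n` and `a_k = (-1)^k/(k-1)! + (-1)^{k+1} n/k!` for
`1 ≤ k ≤ n-1`. -/
theorem coefficients_unique (n : ℕ) (hn : 2 ≤ n) (a : ℕ → ℚ)
    (han : a n = 0)
    (h1 : a 0 + a 1 = -1)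
    (h2 : ∀ l : ℕ, 1 ≤ l → l ≤ n - 1 →
      ∑ k ∈ Finset.range (l + 1),
        (a k + ((k : ℚ) + 1) * a (k + 1)) / (((l - k).factorial : ℚ)) = 0) :
    a 0 = -(n : ℚ) ∧
      ∀ k : ℕ, 1 ≤ k → k ≤ n - 1 →
        a k = (-1) ^ k / ((k - 1).factorial : ℚ)
          + (-1) ^ (k + 1) * (n : ℚ) / (k.factorial : ℚ) := by
  have hb : ∀ l, l ≤ n - 1 →
      a l + ((l:ℚ)+1) * a (l+1) = (-1:ℚ)^(l+1) / (l.factorial : ℚ) := by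
    intro l
    induction l using Nat.strong_induction_on with
    | _ l ih =>
      intro hl
      rcases Nat.eq_zero_or_pos l with rfl | h0
      · norm_num
        linarith
      · have hs := h2 l h0 hl
        rw [Finset.sum_range_succ] at hs
        have hrw : ∀ k ∈ Finset.range l,
            (a k + ((k:ℚ)+1) * a (k+1)) / (((l-k).factorial : ℚ))
              = (-1:ℚ)^(k+1) / ((k.factorial : ℚ) * ((l-k).factorial : ℚ)) := by
          intro k hk
          have hkl := Finset.mem_range.mp hk
          rw [ih k hkl (le_trans (Nat.le_of_lt hkl) hl), div_div]
        rw [Finset.sum_congr rfl hrw] at hs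
        have hkey := key_alt l h0
        rw [Finset.sum_range_succ] at hkey
        simp only [Nat.sub_self, Nat.factorial_zero, Nat.cast_one, div_one, mul_one] at hs hkey
        linarith
  have hstep : ∀ d k, 1 ≤ k → k + d = n - 1 →
      a k = (-1:ℚ) ^ k / ((k - 1).factorial : ℚ)
          + (-1:ℚ) ^ (k + 1) * (n : ℚ) / (k.factorial : ℚ) := by
    intro d
    induction d with
    | zero =>
      intro k hk1 hkd
      have hkn : k + 1 = n := by omega
      have hbk := hb k (by omega)
      rw [hkn, han, mul_zero, add_zero] at hbk
      obtain ⟨m, rfl⟩ : ∃ m, k = m + 1 := ⟨k - 1, by omega⟩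
      have hnq : (n : ℚ) = (m:ℚ) + 2 := by
        have : n = m + 2 := by omega
        rw [this]; push_cast; ring
      have hpow : (-1:ℚ)^n = (-1:ℚ)^m := by
        rw [show n = m + 2 from by omega, pow_succ, pow_succ]; ring
      rw [hbk, hnq, hpow]
      simp only [Nat.add_sub_cancel, Nat.factorial_succ]
      have hm0 : (m.factorial:ℚ) ≠ 0 := Nat.cast_ne_zero.mpr m.factorial_ne_zero
      have hm1 : ((m:ℚ) + 1) ≠ 0 := by positivity
      push_cast
      field_simp
      ring
    | succ d ih =>
      intro k hk1 hkd
      have hk1n := ih (k+1) (by omega) (by omega)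
      have hbk := hb k (by omega)
      rw [hk1n] at hbk
      rw [eq_sub_of_add_eq hbk]
      obtain ⟨m, rfl⟩ : ∃ m, k = m + 1 := ⟨k - 1, by omega⟩
      simp only [Nat.add_sub_cancel, Nat.factorial_succ]
      have hm0 : (m.factorial:ℚ) ≠ 0 := Nat.cast_ne_zero.mpr m.factorial_ne_zero
      have hm1 : ((m:ℚ) + 1) ≠ 0 := by positivity
      have hm2 : ((m:ℚ) + 2) ≠ 0 := by positivity
      push_cast
      field_simp
      ring
  have ha1 := hstep (n - 1 - 1) 1 le_rfl (by omega)
  simp only [Nat.sub_self, Nat.factorial_zero, Nat.factorial_one, Nat.cast_one, div_one,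
    pow_one, pow_succ] at ha1
  constructor
  · have : a 1 = -1 + (n:ℚ) := by rw [ha1]; ring
    linarith
  · intro k hk1 hk2
    exact hstep (n - 1 - k) k hk1 (by omega)
end

section
/- Let W be a complete DVR with uniformizer p and fraction field K, let z ∈ W with z and z-1 units, and suppose z^{p^k} = z for some k ≥ 1 (z a root of unity of order prime to p). Let Li_n: a sequence of elements satisfying the recursion Li_n(z) = L^{(p)}_n(z) + p^{-n} Li_n(z^p) where L^{(p)}_n(z^{p^i}) ∈ W for all i. Then Li_n(z) = (p^n/(p^{kn} - 1)) · ∑_{i=0}^{k-1} p^{(k-1-i)n} L^{(p)}_n(z^{p^i}), and in particular Li_n(z) ∈ p^n W. -/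
/-- Let `W` be a (complete) DVR with uniformizer `p`, fraction field `K`,
`z ∈ W` with `z`, `z-1` units and `z^{p^k} = z`. If `Li_n`, `L^{(p)}_n` satisfy the
recursion `Li_n(z^{p^i}) = L^{(p)}_n(z^{p^i}) + p^{-n} Li_n(z^{p^{i+1}})` with
`L^{(p)}_n(z^{p^i}) ∈ W`, then
`Li_n(z) = (p^n/(p^{kn}-1)) ∑_{i=0}^{k-1} p^{(k-1-i)n} L^{(p)}_n(z^{p^i})`,
and in particular `Li_n(z) ∈ p^n W`. -/
theorem polylog_root_of_unity_value {W K : Type*} [CommRing W] [IsDomain W]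
    [IsDiscreteValuationRing W] [Field K] [Algebra W K] [IsFractionRing W K]
    (p : ℕ) (hp : p.Prime) (hirr : Irreducible (p : W))
    (n k : ℕ) (hn : 1 ≤ n) (hk : 1 ≤ k)
    (z : W) (hz : IsUnit z) (hz1 : IsUnit (z - 1)) (hzk : z ^ p ^ k = z)
    (Li Lp : W → K)
    (hrec : ∀ i, i < k →
      Li (z ^ p ^ i) = Lp (z ^ p ^ i) + ((p : K) ^ n)⁻¹ * Li (z ^ p ^ (i + 1)))
    (hLp : ∀ i, i < k → ∃ u : W, Lp (z ^ p ^ i) = algebraMap W K u)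
    (hunit : IsUnit ((p : W) ^ (k * n) - 1)) :
    Li z = ((p : K) ^ n / ((p : K) ^ (k * n) - 1))
        * ∑ i ∈ Finset.range k, (p : K) ^ ((k - 1 - i) * n) * Lp (z ^ p ^ i)
      ∧ ∃ u : W, Li z = algebraMap W K ((p : W) ^ n * u) := by
  have hinj : Function.Injective (algebraMap W K) := IsFractionRing.injective W K
  have hpW : ((p : W) : W) ≠ 0 := hirr.ne_zero
  have hpK : (p : K) ≠ 0 := by
    intro h
    apply hpW
    apply hinj
    rw [map_natCast, map_zero, h]
  have hPne : ((p : K) ^ n) ≠ 0 := pow_ne_zero _ hpK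
  have hDK : IsUnit ((p : K) ^ (k * n) - 1) := by
    have := hunit.map (algebraMap W K)
    rwa [map_sub, map_pow, map_natCast, map_one] at this
  have hD : ((p : K) ^ (k * n) - 1) ≠ 0 := hDK.ne_zero
  -- unfold the recursion
  have key : ∀ j, j ≤ k → Li z =
      (∑ i ∈ Finset.range j, (((p : K) ^ n)⁻¹) ^ i * Lp (z ^ p ^ i))
        + (((p : K) ^ n)⁻¹) ^ j * Li (z ^ p ^ j) := by
    intro j
    induction j with
    | zero => intro _; simp
    | succ j ih =>
      intro hj
      rw [ih (Nat.le_of_succ_le hj), Finset.sum_range_succ, hrec j (by omega)]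
      ring
  have hmain := key k le_rfl
  rw [hzk] at hmain
  -- main multiplicative identity
  have hmul : Li z * ((p : K) ^ (k * n) - 1)
      = (p : K) ^ n * ∑ i ∈ Finset.range k, (p : K) ^ ((k - 1 - i) * n) * Lp (z ^ p ^ i) := by
    have h1 : Li z * (1 - (((p : K) ^ n)⁻¹) ^ k)
        = ∑ i ∈ Finset.range k, (((p : K) ^ n)⁻¹) ^ i * Lp (z ^ p ^ i) := by
      linear_combination hmain
    have h2 := congrArg (fun x => ((p : K) ^ n) ^ k * x) h1
    simp only [Finset.mul_sum] at h2
    have h3 : ∀ i ∈ Finset.range k,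
        ((p : K) ^ n) ^ k * ((((p : K) ^ n)⁻¹) ^ i * Lp (z ^ p ^ i))
          = (p : K) ^ n * ((p : K) ^ ((k - 1 - i) * n) * Lp (z ^ p ^ i)) := by
      intro i hi
      rw [Finset.mem_range] at hi
      have hk' : k = i + (1 + (k - 1 - i)) := by omega
      rw [mul_comm ((k - 1 - i)) n, pow_mul]
      rw [hk', pow_add, pow_add]
      field_simp
      rw [show i + (1 + (k - 1 - i)) - 1 - i = k - 1 - i from by omega]
      have hc : (p : K) ^ (n * i) * (p : K)⁻¹ ^ (n * i) = 1 := by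
        rw [← mul_pow, mul_inv_cancel₀ hpK, one_pow]
      linear_combination ((p : K) ^ (n * (k - 1 - i)) * Lp (z ^ p ^ i)) * hc
    rw [Finset.sum_congr rfl h3, ← Finset.mul_sum] at h2
    have hPk : ((p : K) ^ n) ^ k = (p : K) ^ (k * n) := by
      rw [← pow_mul, mul_comm]
    have hPQ : ((p : K) ^ n) ^ k * (((p : K) ^ n)⁻¹) ^ k = 1 := by
      rw [← mul_pow, mul_inv_cancel₀ hPne, one_pow]
    rw [← hPk]
    linear_combination h2 + Li z * hPQ
  have part1 : Li z = ((p : K) ^ n / ((p : K) ^ (k * n) - 1))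
      * ∑ i ∈ Finset.range k, (p : K) ^ ((k - 1 - i) * n) * Lp (z ^ p ^ i) := by
    rw [div_mul_eq_mul_div, eq_div_iff hD]
    linear_combination hmul
  refine ⟨part1, ?_⟩
  -- integrality
  classical
  set w : ℕ → W := fun i => if h : i < k then (hLp i h).choose else 0 with hw
  set t : W := ∑ i ∈ Finset.range k, (p : W) ^ ((k - 1 - i) * n) * w i with ht
  have htK : algebraMap W K t
      = ∑ i ∈ Finset.range k, (p : K) ^ ((k - 1 - i) * n) * Lp (z ^ p ^ i) := by
    rw [ht, map_sum]
    refine Finset.sum_congr rfl ?_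
    intro i hi
    rw [Finset.mem_range] at hi
    rw [map_mul, map_pow, map_natCast, hw]
    simp only [dif_pos hi]
    rw [← (hLp i hi).choose_spec]
  refine ⟨↑hunit.unit⁻¹ * t, ?_⟩
  have hvinv : algebraMap W K ↑hunit.unit⁻¹ = ((p : K) ^ (k * n) - 1)⁻¹ := by
    have h1 : algebraMap W K (↑hunit.unit * ↑hunit.unit⁻¹) = 1 := by
      rw [hunit.unit.mul_inv, map_one]
    rw [map_mul] at h1
    have h2 : algebraMap W K ↑hunit.unit = (p : K) ^ (k * n) - 1 := by
      rw [IsUnit.unit_spec, map_sub, map_pow, map_natCast, map_one]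
    rw [h2] at h1
    exact eq_inv_of_mul_eq_one_right h1
  rw [map_mul, map_mul, map_pow, map_natCast, hvinv, htK, part1]
  field_simp
end

section
/- Let W be a complete DVR with uniformizer p and p > n+1. Let α ∈ W be a unit with 1 - α a unit, and let (g_m)_{m=0}^{n} be functions of w ∈ W given by convergent power series with g₀(w) = α(1+pw)/(1-α(1+pw)), g_m(0) = c_m ∈ W, and g_m'(w) = g_{m-1}(w)/(1+pw). Then for each m ≤ n and all w ∈ W: g_m(w) ≡ ∑_{k=0}^{m} c_{m-k} w^k / k! (mod p), where c_0 = α/(1-α). -/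
open Filter Topology Asymptotics

section Helpers
variable {K : Type*} [NontriviallyNormedField K]

lemma na_finsum (na : IsNonarchimedean fun x : K => ‖x‖) {ι : Type*} (s : Finset ι)
    (f : ι → K) {C : ℝ} (hC : 0 ≤ C) (h : ∀ i ∈ s, ‖f i‖ ≤ C) : ‖∑ i ∈ s, f i‖ ≤ C := by
  classical
  induction s using Finset.induction_on with
  | empty => simpa using hC
  | @insert a s' hns ih =>
    rw [Finset.sum_insert hns]
    refine le_trans (na _ _) (max_le (h a (by simp)) (ih fun i hi => h i (by simp [hi])))

lemma na_hasSum (na : IsNonarchimedean fun x : K => ‖x‖) {f : ℕ → K} {s : K} {C : ℝ}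
    (hC : 0 ≤ C) (hs : HasSum f s) (h : ∀ i, ‖f i‖ ≤ C) : ‖s‖ ≤ C := by
  refine le_of_tendsto (hs.norm : Filter.Tendsto _ Filter.atTop (nhds ‖s‖)) ?_
  filter_upwards with t
  exact na_finsum na t f hC fun i _ => h i

lemma na_nat (na : IsNonarchimedean fun x : K => ‖x‖) (j : ℕ) : ‖(j : K)‖ ≤ 1 := by
  induction j with
  | zero => simp
  | succ m ih =>
    push_cast
    exact le_trans (na _ _) (by simp [ih])

lemma na_int (na : IsNonarchimedean fun x : K => ‖x‖) (j : ℤ) : ‖(j : K)‖ ≤ 1 := by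
  obtain ⟨m, rfl | rfl⟩ := Int.eq_nat_or_neg j
  · exact_mod_cast na_nat na m
  · push_cast
    rw [norm_neg]
    exact na_nat na m

lemma na_coprime (na : IsNonarchimedean fun x : K => ‖x‖) {p j : ℕ}
    (hpnorm : ‖(p : K)‖ < 1) (h : Nat.Coprime j p) : ‖(j : K)‖ = 1 := by
  refine le_antisymm (na_nat na j) ?_
  obtain ⟨u, v, huv⟩ := (Nat.isCoprime_iff_coprime.mpr h)
  by_contra hlt
  push_neg at hlt
  have h1 : (1 : K) = u * j + v * p := by exact_mod_cast congrArg (fun z : ℤ => (z : K)) huv.symm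
  have : (1 : ℝ) ≤ max (‖(u : K)‖ * ‖(j : K)‖) (‖(v : K)‖ * ‖(p : K)‖) := by
    calc (1:ℝ) = ‖(1 : K)‖ := by simp
    _ = ‖(u : K) * j + (v : K) * p‖ := by rw [h1]
    _ ≤ max ‖(u : K) * (j : K)‖ ‖(v : K) * (p : K)‖ := na _ _
    _ = max (‖(u : K)‖ * ‖(j : K)‖) (‖(v : K)‖ * ‖(p : K)‖) := by rw [norm_mul, norm_mul]
  rcases max_cases (‖(u : K)‖ * ‖(j : K)‖) (‖(v : K)‖ * ‖(p : K)‖) with ⟨he, _⟩ | ⟨he, _⟩ <;>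
    rw [he] at this
  · have := lt_of_le_of_lt this (mul_lt_one_of_nonneg_of_lt_one_right (na_int na u)
      (norm_nonneg _) hlt)
    simp at this
  · have := lt_of_le_of_lt this (mul_lt_one_of_nonneg_of_lt_one_right (na_int na v)
      (norm_nonneg _) hpnorm)
    simp at this

lemma na_add_eq (na : IsNonarchimedean fun x : K => ‖x‖) {x y : K} (h : ‖y‖ < ‖x‖) :
    ‖x + y‖ = ‖x‖ := by
  refine le_antisymm (le_trans (na _ _) (max_le le_rfl h.le)) ?_
  have h2 : ‖x‖ ≤ max ‖x + y‖ ‖y‖ := by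
    have := na (x + y) (-y)
    simpa using this
  rcases max_cases ‖x + y‖ ‖y‖ with ⟨he, _⟩ | ⟨he, _⟩ <;> rw [he] at h2
  · exact h2
  · exact absurd (lt_of_le_of_lt h2 h) (lt_irrefl _)

lemma na_summable (na : IsNonarchimedean fun x : K => ‖x‖) [CompleteSpace K] {f : ℕ → K}
    (h : Tendsto f atTop (𝓝 0)) : Summable f := by
  rw [summable_iff_vanishing]
  intro e he
  obtain ⟨ε, hε, hball⟩ := Metric.mem_nhds_iff.mp he
  obtain ⟨N, hN⟩ := (Metric.tendsto_atTop.mp h) (ε / 2) (by linarith)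
  refine ⟨Finset.range N, fun t ht => hball ?_⟩
  rw [Metric.mem_ball, dist_zero_right]
  have : ‖∑ i ∈ t, f i‖ ≤ ε / 2 := by
    refine na_finsum na t f (by linarith) fun i hi => ?_
    have hiN : N ≤ i := by
      by_contra hc
      exact (Finset.disjoint_left.mp ht hi) (Finset.mem_range.mpr (by omega))
    have := hN i hiN
    rw [dist_zero_right] at this
    exact this.le
  linarith

-- norms of factorials

lemma norm_fact_lt (na : IsNonarchimedean fun x : K => ‖x‖) {p : ℕ} (hp : p.Prime)
    (hpnorm : ‖(p : K)‖ < 1) {k : ℕ} (hk : k < p) : ‖(k.factorial : K)‖ = 1 := by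
  refine na_coprime na hpnorm (Nat.Coprime.symm ?_)
  rw [Nat.Prime.coprime_iff_not_dvd hp, hp.dvd_factorial]
  omega

lemma norm_coprime_nat (na : IsNonarchimedean fun x : K => ‖x‖) {p : ℕ} (hp : p.Prime)
    (hpnorm : ‖(p : K)‖ < 1) {j : ℕ} (hj : j < p) (hj0 : 0 < j) : ‖(j : K)‖ = 1 := by
  refine na_coprime na hpnorm (Nat.Coprime.symm ?_)
  rw [Nat.Prime.coprime_iff_not_dvd hp]
  intro hdvd
  exact absurd (Nat.le_of_dvd hj0 hdvd) (not_le.mpr hj)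



-- digit sum positive

lemma digits_sum_pos {p k : ℕ} (hp : 2 ≤ p) (hk : k ≠ 0) : 1 ≤ (p.digits k).sum := by
  by_contra h
  push_neg at h
  interval_cases hs : (p.digits k).sum
  have hall : ∀ x ∈ p.digits k, x = 0 := by
    intro x hx
    exact (List.sum_eq_zero_iff.mp hs) x hx
  have : Nat.ofDigits p (p.digits k) = 0 := by
    have : ∀ L : List ℕ, (∀ x ∈ L, x = 0) → Nat.ofDigits p L = 0 := by
      intro L
      induction L with
      | nil => simp [Nat.ofDigits]
      | cons a L ih =>
        intro hL
        rw [Nat.ofDigits_cons, hL a (by simp), ih (fun x hx => hL x (by simp [hx]))]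
        simp
    exact this _ hall
  rw [Nat.ofDigits_digits] at this
  exact hk this

-- key valuation bound: padicValNat p (k!) + m + 1 ≤ k when m+1 < p, m+1 ≤ k

lemma padic_fact_bound {p m k : ℕ} (hp : p.Prime) (hm : m + 2 ≤ p) (hk : m + 1 ≤ k) :
    padicValNat p (k.factorial) + m + 1 ≤ k := by
  haveI : Fact p.Prime := ⟨hp⟩
  set v := padicValNat p (k.factorial) with hv
  rcases Nat.eq_zero_or_pos v with h0 | h1
  · omega
  · have hleg := sub_one_mul_padicValNat_factorial (p := p) k
    rw [← hv] at hleg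
    have hs1 : 1 ≤ (p.digits k).sum := digits_sum_pos hp.two_le (by omega)
    have hs2 : (p.digits k).sum ≤ k := Nat.digit_sum_le p k
    obtain ⟨q, hq⟩ : ∃ q, p = q + 2 := ⟨p - 2, by omega⟩
    have hqv : q * 1 ≤ q * v := Nat.mul_le_mul_left q h1
    have hexp : (p - 1) * v = q * v + v := by
      rw [hq]
      have h21 : q + 2 - 1 = q + 1 := rfl
      rw [h21]
      ring
    omega

lemma norm_factorial (na : IsNonarchimedean fun x : K => ‖x‖) {p : ℕ} (hp : p.Prime)
    (hpnorm : ‖(p : K)‖ < 1) (k : ℕ) :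
    ‖(k.factorial : K)‖ = ‖(p : K)‖ ^ (padicValNat p k.factorial) := by
  set N := k.factorial with hN
  have hN0 : N ≠ 0 := Nat.factorial_ne_zero k
  have hdecomp : p ^ N.factorization p * (N / p ^ N.factorization p) = N :=
    Nat.ordProj_mul_ordCompl_eq_self N p
  have hcop : Nat.Coprime (N / p ^ N.factorization p) p := (Nat.coprime_ordCompl hp hN0).symm
  have hcast : (N : K) = (p : K) ^ N.factorization p * ((N / p ^ N.factorization p : ℕ) : K) := by
    rw [← Nat.cast_pow, ← Nat.cast_mul, hdecomp]
  rw [hcast, norm_mul, norm_pow, na_coprime na hpnorm hcop, mul_one,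
    Nat.factorization_def N hp]

lemma pow_taylor_aux (na : IsNonarchimedean fun x : K => ‖x‖) {w h : K}
    (hw : ‖w‖ ≤ 1) (hh : ‖h‖ ≤ 1) (j : ℕ) :
    ‖(w + h) ^ (j + 1) - w ^ (j + 1) - ((j : K) + 1) * h * w ^ j‖ ≤ ‖h‖ ^ 2 := by
  have naB : ∀ x y : K, ‖x + y‖ ≤ max ‖x‖ ‖y‖ := fun x y => na x y
  have hwh : ‖w + h‖ ≤ 1 := le_trans (naB w h) (max_le hw hh)
  induction j with
  | zero =>
    have : (w + h) ^ 1 - w ^ 1 - ((0 : K) + 1) * h * w ^ 0 = 0 := by ring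
    rw [Nat.cast_zero, this]
    simp [sq_nonneg ‖h‖]
  | succ j ih =>
    have key : (w + h) ^ (j + 1 + 1) - w ^ (j + 1 + 1) - (((j : K) + 1) + 1) * h * w ^ (j + 1)
        = (w + h) * ((w + h) ^ (j + 1) - w ^ (j + 1) - ((j : K) + 1) * h * w ^ j)
          + ((j : K) + 1) * h ^ 2 * w ^ j := by ring
    rw [Nat.cast_add, Nat.cast_one, key]
    refine le_trans (naB _ _) (max_le ?_ ?_)
    · rw [norm_mul]
      calc ‖w + h‖ * ‖(w + h) ^ (j + 1) - w ^ (j + 1) - ((j : K) + 1) * h * w ^ j‖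
          ≤ 1 * ‖h‖ ^ 2 := mul_le_mul hwh ih (norm_nonneg _) zero_le_one
        _ = ‖h‖ ^ 2 := one_mul _
    · rw [norm_mul, norm_mul, norm_pow w j, norm_pow h 2]
      have hj1 : ‖(j : K) + 1‖ ≤ 1 := by
        have := na_nat na (j + 1)
        push_cast at this
        exact this
      calc ‖(j : K) + 1‖ * ‖h‖ ^ 2 * ‖w‖ ^ j ≤ 1 * ‖h‖ ^ 2 * 1 := by
            refine mul_le_mul (mul_le_mul hj1 le_rfl (sq_nonneg _) zero_le_one)
              (pow_le_one₀ (norm_nonneg _) hw) (pow_nonneg (norm_nonneg _) _) (by positivity)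
        _ = ‖h‖ ^ 2 := by ring

lemma pow_taylor_est (na : IsNonarchimedean fun x : K => ‖x‖) (k : ℕ) {w h : K}
    (hw : ‖w‖ ≤ 1) (hh : ‖h‖ ≤ 1) :
    ‖(w + h) ^ k - w ^ k - (k : K) * h * w ^ (k - 1)‖ ≤ ‖h‖ ^ 2 := by
  cases k with
  | zero => simp [sq_nonneg ‖h‖]
  | succ j =>
    have := pow_taylor_aux na hw hh j
    rw [Nat.add_sub_cancel]
    push_cast
    push_cast at this
    exact this

lemma bound_of_tendsto {a : ℕ → K} (h : Tendsto a atTop (𝓝 0)) :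
    ∃ A : ℝ, 0 ≤ A ∧ ∀ k, ‖a k‖ ≤ A := by
  obtain ⟨N, hN⟩ := (Metric.tendsto_atTop.mp h) 1 one_pos
  refine ⟨1 + ∑ i ∈ Finset.range N, ‖a i‖, by positivity, fun k => ?_⟩
  rcases le_or_gt N k with hk | hk
  · have := hN k hk
    rw [dist_zero_right] at this
    have hs : (0:ℝ) ≤ ∑ i ∈ Finset.range N, ‖a i‖ := Finset.sum_nonneg fun i _ => norm_nonneg _
    linarith
  · have : ‖a k‖ ≤ ∑ i ∈ Finset.range N, ‖a i‖ :=
      Finset.single_le_sum (fun i _ => norm_nonneg (a i)) (Finset.mem_range.mpr hk)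
    linarith

lemma hasDerivAt_of_series (na : IsNonarchimedean fun x : K => ‖x‖)
    {f : K → K} {a : ℕ → K} {A : ℝ} (hA0 : 0 ≤ A) (hA : ∀ k, ‖a k‖ ≤ A)
    (hf : ∀ w : K, ‖w‖ ≤ 1 → HasSum (fun k => a k * w ^ k) (f w))
    {w : K} (hw : ‖w‖ ≤ 1) {D : K}
    (hD : HasSum (fun (k : ℕ) => ((k : K) + 1) * a (k + 1) * w ^ k) D) :
    HasDerivAt f D w := by
  have naB : ∀ x y : K, ‖x + y‖ ≤ max ‖x‖ ‖y‖ := fun x y => na x y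
  rw [hasDerivAt_iff_isLittleO, isLittleO_iff]
  intro ε hε
  rw [Metric.eventually_nhds_iff]
  have hA1 : (0:ℝ) < A + 1 := by linarith
  refine ⟨min 1 (ε / (A + 1)), by positivity, fun x' hx' => ?_⟩
  rw [dist_eq_norm] at hx'
  set h : K := x' - w with hdef
  have hx'eq : x' = w + h := by rw [hdef]; ring
  have hh1 : ‖h‖ ≤ 1 := le_of_lt (lt_of_lt_of_le hx' (min_le_left _ _))
  have hh2 : ‖h‖ < ε / (A + 1) := lt_of_lt_of_le hx' (min_le_right _ _)
  have hx'1 : ‖x'‖ ≤ 1 := by rw [hx'eq]; exact le_trans (naB w h) (max_le hw hh1)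
  -- HasSum manipulations
  have S1 : HasSum (fun k => a k * x' ^ k) (f x') := hf x' hx'1
  have S2 : HasSum (fun k => a k * w ^ k) (f w) := hf w hw
  have S3 : HasSum (fun (k : ℕ) => ((k : K) + 1) * a (k + 1) * w ^ k * h) (D * h) := hD.mul_right h
  set f0 : ℕ → K := fun k => a k * ((k : K) * h * w ^ (k - 1)) with hf0
  have S3a : HasSum (fun n => f0 (n + 1)) (D * h) := by
    refine S3.congr_fun fun n => ?_
    simp only [hf0]
    push_cast
    ring
  have S3' : HasSum f0 (D * h) := by
    have := (hasSum_nat_add_iff (f := f0) 1).mp S3a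
    simpa [hf0] using this
  have S : HasSum (fun k => a k * x' ^ k - a k * w ^ k - f0 k) (f x' - f w - D * h) :=
    (S1.sub S2).sub S3'
  have key : ‖f x' - f w - D * h‖ ≤ A * ‖h‖ ^ 2 := by
    refine na_hasSum na (by positivity) S fun k => ?_
    have : a k * x' ^ k - a k * w ^ k - f0 k
        = a k * ((w + h) ^ k - w ^ k - (k : K) * h * w ^ (k - 1)) := by
      rw [hx'eq, hf0]; ring
    rw [this, norm_mul]
    exact mul_le_mul (hA k) (pow_taylor_est na k hw hh1) (norm_nonneg _) hA0
  have hsm : (x' - w) • D = D * h := by rw [smul_eq_mul, ← hdef]; ring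
  rw [hsm]
  calc ‖f x' - f w - D * h‖ ≤ A * ‖h‖ ^ 2 := key
    _ = (A * ‖h‖) * ‖h‖ := by ring
    _ ≤ ε * ‖h‖ := by
        refine mul_le_mul_of_nonneg_right ?_ (norm_nonneg _)
        have h3 : ‖h‖ * (A + 1) < ε := (lt_div_iff₀ hA1).mp hh2
        nlinarith [norm_nonneg h]
    _ = ε * ‖x' - w‖ := by rw [← hdef]

/-- identity theorem on the closed unit ball -/

lemma coeff_eq_zero (na : IsNonarchimedean fun x : K => ‖x‖) {a : ℕ → K}
    (h : ∀ w : K, ‖w‖ ≤ 1 → HasSum (fun k => a k * w ^ k) 0) : ∀ k, a k = 0 := by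
  -- bound on coefficients
  have hsum1 : Summable a := by
    have := (h 1 (by simp)).summable
    simpa using this
  obtain ⟨A, hA0, hA⟩ := bound_of_tendsto hsum1.tendsto_atTop_zero
  obtain ⟨y, hy⟩ := NormedField.exists_one_lt_norm (α := K)
  set x := y⁻¹ with hx
  have hy0 : y ≠ 0 := by intro h0; rw [h0] at hy; simp at hy; linarith
  have hx0 : x ≠ 0 := inv_ne_zero hy0
  have hxn : 0 < ‖x‖ := norm_pos_iff.mpr hx0
  have hx1 : ‖x‖ < 1 := by
    rw [hx, norm_inv]
    rw [inv_lt_one_iff₀]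
    right; exact hy
  intro k
  induction k using Nat.strong_induction_on with
  | _ k ih =>
    -- for each t, ‖a k‖ ≤ A * ‖x^(t+1)‖
    have bound : ∀ t : ℕ, ‖a k‖ ≤ A * ‖x‖ ^ (t + 1) := by
      intro t
      set w : K := x ^ (t + 1) with hwdef
      have hw1 : ‖w‖ ≤ 1 := by
        rw [hwdef, norm_pow]
        exact pow_le_one₀ hxn.le hx1.le
      have hw0 : w ≠ 0 := pow_ne_zero _ hx0
      have hwn : 0 < ‖w‖ := norm_pos_iff.mpr hw0
      -- shift away the first k (zero) coefficients
      have hzero : ∑ i ∈ Finset.range k, a i * w ^ i = 0 := by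
        refine Finset.sum_eq_zero fun i hi => ?_
        rw [ih i (Finset.mem_range.mp hi)]
        simp
      have S0 : HasSum (fun i => a i * w ^ i) 0 := h w hw1
      have Sk : HasSum (fun i => a (i + k) * w ^ (i + k)) 0 := by
        rw [hasSum_nat_add_iff (f := fun i => a i * w ^ i) k, hzero, add_zero]
        exact S0
      -- split off the i = 0 term
      have Sk1 : HasSum (fun i => a (i + 1 + k) * w ^ (i + 1 + k)) (-(a k * w ^ k)) := by
        apply (hasSum_nat_add_iff (f := fun i => a (i + k) * w ^ (i + k)) 1).mpr
        simpa using Sk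
      have hnorm : ‖a k * w ^ k‖ ≤ A * ‖w‖ ^ (k + 1) := by
        rw [← norm_neg]
        refine na_hasSum na (by positivity) Sk1 fun i => ?_
        rw [norm_mul, norm_pow]
        refine mul_le_mul (hA _) (pow_le_pow_of_le_one hwn.le hw1 (by omega))
          (by positivity) hA0
      rw [norm_mul, norm_pow] at hnorm
      have hpow : A * ‖w‖ ^ (k + 1) = (A * ‖w‖) * ‖w‖ ^ k := by ring
      rw [hpow] at hnorm
      have hred := le_of_mul_le_mul_right hnorm (by positivity : (0:ℝ) < ‖w‖ ^ k)
      rw [hwdef, norm_pow] at hred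
      exact hred
    -- conclude
    have h2 : Tendsto (fun t : ℕ => A * ‖x‖ ^ (t + 1)) atTop (𝓝 0) := by
      have := tendsto_pow_atTop_nhds_zero_of_lt_one hxn.le hx1
      have := (this.const_mul A).comp (tendsto_add_atTop_nat 1)
      simpa [Function.comp_def] using this
    have : ‖a k‖ ≤ 0 := le_of_tendsto_of_tendsto' tendsto_const_nhds h2 bound
    rw [norm_le_zero_iff] at this
    exact this



end Helpers



/-- Let `K` be a complete nonarchimedean field of mixed characteristic
`(0,p)` (ring of integers `W = {x | ‖x‖ ≤ 1}`, uniformizer `p`), with `p > n+1`. Let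
`α` with `‖α‖ = ‖1-α‖ = 1`, and let `g_0, …, g_n : W → K` be given by convergent power
series with `g₀(w) = α(1+pw)/(1-α(1+pw))`, `g_m(0) = c_m ∈ W` (`c_0 = α/(1-α)`), and
`g_{m+1}'(w) = g_m(w)/(1+pw)`. Then for each `m ≤ n` and all `w ∈ W`:
`g_m(w) ≡ ∑_{k=0}^{m} c_{m-k} w^k/k! (mod p)`. -/
theorem g_m_congruence {K : Type*} [NontriviallyNormedField K] [CompleteSpace K]
    [CharZero K] (na : IsNonarchimedean fun x : K => ‖x‖)
    (p n : ℕ) (hp : p.Prime) (hpn : n + 1 < p)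
    (hpnorm : ‖(p : K)‖ < 1) (hp0 : (p : K) ≠ 0)
    (α : K) (hα : ‖α‖ = 1) (hα1 : ‖1 - α‖ = 1)
    (g : ℕ → K → K) (c : ℕ → K) (hc : ∀ m, ‖c m‖ ≤ 1) (hc0 : c 0 = α / (1 - α))
    (hg0 : ∀ w : K, ‖w‖ ≤ 1 →
      g 0 w = α * (1 + (p : K) * w) / (1 - α * (1 + (p : K) * w)))
    (hinit : ∀ m, m ≤ n → g m 0 = c m)
    (hser : ∀ m, m ≤ n → ∃ d : ℕ → K,
      ∀ w : K, ‖w‖ ≤ 1 → HasSum (fun k : ℕ => d k * w ^ k) (g m w))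
    (hode : ∀ m, m + 1 ≤ n → ∀ w : K, ‖w‖ ≤ 1 →
      HasDerivAt (g (m + 1)) (g m w / (1 + (p : K) * w)) w) :
    ∀ m, m ≤ n → ∀ w : K, ‖w‖ ≤ 1 →
      ‖g m w - ∑ k ∈ Finset.range (m + 1), c (m - k) * w ^ k / (k.factorial : K)‖
        ≤ ‖(p : K)‖ := by
  have naB : ∀ x y : K, ‖x + y‖ ≤ max ‖x‖ ‖y‖ := fun x y => na x y
  have naSub : ∀ x y : K, ‖x - y‖ ≤ max ‖x‖ ‖y‖ := fun x y => by
    rw [sub_eq_add_neg]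
    refine le_trans (naB x (-y)) ?_
    rw [norm_neg]
  have hρ0 : (0:ℝ) < ‖(p : K)‖ := norm_pos_iff.mpr hp0
  have key : ∀ m, m ≤ n → ∃ a : ℕ → K,
      (∀ w : K, ‖w‖ ≤ 1 → HasSum (fun k => a k * w ^ k) (g m w)) ∧
      (∀ k, k ≤ m → ‖a k - c (m - k) / (k.factorial : K)‖ ≤ ‖(p : K)‖) ∧
      (∀ k, m ≤ k → ‖((k.factorial : ℕ) : K) * a k‖ ≤ ‖(p : K)‖ ^ (k - m)) := by
    intro m
    induction m with
    | zero =>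
      intro _
      have h1α : (1 - α) ≠ 0 := by
        intro h0
        rw [h0] at hα1
        simp at hα1
      set β : K := α / (1 - α) with hβdef
      have hβ : ‖β‖ = 1 := by rw [hβdef, norm_div, hα, hα1, div_one]
      have hβ1 : β + 1 = (1 - α)⁻¹ := by
        rw [hβdef]
        field_simp
        ring
      have hβ1n : ‖β + 1‖ = 1 := by
        rw [hβ1, norm_inv, hα1, inv_one]
      refine ⟨fun k => if k = 0 then β else (p : K) ^ k * β ^ k * (β + 1), ?_, ?_, ?_⟩
      · intro w hw
        set r : K := β * ((p : K) * w) with hrdef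
        have hr : ‖r‖ < 1 := by
          rw [hrdef, norm_mul, norm_mul, hβ, one_mul]
          calc ‖(p : K)‖ * ‖w‖ ≤ ‖(p : K)‖ * 1 :=
              mul_le_mul_of_nonneg_left hw (norm_nonneg _)
            _ = ‖(p : K)‖ := mul_one _
            _ < 1 := hpnorm
        have geo : HasSum (fun k : ℕ => r ^ k) (1 - r)⁻¹ :=
          hasSum_geometric_of_norm_lt_one hr
        have SA : HasSum (fun k : ℕ => β * (β * (p : K)) ^ k * w ^ k) (β * (1 - r)⁻¹) := by
          refine (geo.mul_left β).congr_fun fun k => ?_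
          rw [hrdef]
          rw [mul_pow, mul_pow]
          ring
        have SB : HasSum (fun k : ℕ => ((p : K) * w) * (β * (β * (p : K)) ^ k * w ^ k))
            (((p : K) * w) * (β * (1 - r)⁻¹)) := SA.mul_left _
        set B' : ℕ → K := fun k =>
          if k = 0 then 0 else ((p : K) * w) * (β * (β * (p : K)) ^ (k - 1) * w ^ (k - 1))
          with hB'def
        have SB' : HasSum B' (((p : K) * w) * (β * (1 - r)⁻¹)) := by
          have hshift : HasSum (fun k : ℕ => B' (k + 1)) (((p : K) * w) * (β * (1 - r)⁻¹)) := by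
            refine SB.congr_fun fun k => ?_
            simp only [hB'def, Nat.add_sub_cancel]
            rw [if_neg (Nat.succ_ne_zero k)]
          have := (hasSum_nat_add_iff (f := B') 1).mp hshift
          simpa [hB'def] using this
        have SAB := SA.add SB'
        have hterm : ∀ k : ℕ,
            (if k = 0 then β else (p : K) ^ k * β ^ k * (β + 1)) * w ^ k
            = β * (β * (p : K)) ^ k * w ^ k + B' k := by
          intro k
          cases k with
          | zero => simp [hB'def]
          | succ j =>
            rw [if_neg (Nat.succ_ne_zero j)]
            simp only [hB'def, Nat.add_sub_cancel, if_neg (Nat.succ_ne_zero j)]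
            rw [mul_pow, mul_pow, pow_succ, pow_succ, pow_succ]
            ring
        have hval : β * (1 - r)⁻¹ + ((p : K) * w) * (β * (1 - r)⁻¹) = g 0 w := by
          have hden : ‖1 - α * (1 + (p : K) * w)‖ = 1 := by
            have : 1 - α * (1 + (p : K) * w) = (1 - α) + (-(α * ((p : K) * w))) := by ring
            rw [this]
            rw [na_add_eq na ?_, hα1]
            rw [norm_neg, norm_mul, norm_mul, hα, one_mul, hα1]
            calc ‖(p : K)‖ * ‖w‖ ≤ ‖(p : K)‖ * 1 :=
                mul_le_mul_of_nonneg_left hw (norm_nonneg _)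
              _ = ‖(p : K)‖ := mul_one _
              _ < 1 := hpnorm
          have hden0 : 1 - α * (1 + (p : K) * w) ≠ 0 := by
            intro h0
            rw [h0] at hden
            simp at hden
          have hrel : (1 - α) * (1 - r) = 1 - α * (1 + (p : K) * w) := by
            rw [hrdef, hβdef]
            field_simp
            ring
          have hr0 : (1 - r) ≠ 0 := by
            intro h0
            rw [h0, mul_zero] at hrel
            exact hden0 hrel.symm
          rw [hg0 w hw]
          have hInv : (1 - r)⁻¹ = (1 - α) / (1 - α * (1 + (p : K) * w)) := by
            rw [eq_div_iff hden0, ← hrel]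
            field_simp
          rw [hInv, hβdef]
          field_simp
        rw [← hval]
        exact SAB.congr_fun hterm
      · intro k hk
        have hk0 : k = 0 := Nat.le_zero.mp hk
        subst hk0
        beta_reduce
        rw [show (if (0:ℕ) = 0 then β else (p : K) ^ 0 * β ^ 0 * (β + 1)) = β from if_pos rfl,
          Nat.sub_zero, Nat.factorial_zero, Nat.cast_one, div_one, hc0, sub_self, norm_zero]
        exact hρ0.le
      · intro k _
        cases k with
        | zero =>
          beta_reduce
          rw [show (if (0:ℕ) = 0 then β else (p : K) ^ 0 * β ^ 0 * (β + 1)) = β from if_pos rfl,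
            Nat.factorial_zero, Nat.cast_one, one_mul, Nat.sub_zero, pow_zero]
          exact le_of_eq hβ
        | succ j =>
          beta_reduce
          rw [if_neg (Nat.succ_ne_zero j), Nat.sub_zero]
          rw [norm_mul, norm_mul, norm_mul, norm_pow, norm_pow, hβ, hβ1n, one_pow]
          have hfac : ‖(((j + 1).factorial : ℕ) : K)‖ ≤ 1 := na_nat na _
          calc ‖(((j + 1).factorial : ℕ) : K)‖ * (‖(p : K)‖ ^ (j + 1) * 1 * 1)
              ≤ 1 * (‖(p : K)‖ ^ (j + 1) * 1 * 1) := by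
                refine mul_le_mul_of_nonneg_right hfac (by positivity)
            _ = ‖(p : K)‖ ^ (j + 1) := by ring
    | succ m ih =>
      intro hm1
      have hm' : m ≤ n := le_trans (Nat.le_succ m) hm1
      obtain ⟨a, aS, ai, aii⟩ := ih hm'
      obtain ⟨d, dS⟩ := hser (m + 1) hm1
      have hdsum : Summable d := by
        have := (dS 1 (by simp)).summable
        simpa using this
      have dtend : Tendsto (fun k => ‖d k‖) atTop (𝓝 0) :=
        tendsto_zero_iff_norm_tendsto_zero.mp hdsum.tendsto_atTop_zero
      obtain ⟨A, hA0, hA⟩ := bound_of_tendsto hdsum.tendsto_atTop_zero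
      have Dsummable : ∀ w : K, ‖w‖ ≤ 1 →
          Summable (fun k : ℕ => ((k : K) + 1) * d (k + 1) * w ^ k) := by
        intro w hw
        refine na_summable na ?_
        rw [tendsto_zero_iff_norm_tendsto_zero]
        refine squeeze_zero (g := fun k => ‖d (k + 1)‖) (fun k => norm_nonneg _)
          (fun k => ?_) ?_
        · have h1 : ‖(k : K) + 1‖ ≤ 1 := by
            have h' := na_nat na (k + 1)
            push_cast at h'
            exact h'
          show ‖((k : K) + 1) * d (k + 1) * w ^ k‖ ≤ ‖d (k + 1)‖
          rw [norm_mul, norm_mul, norm_pow]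
          have h2 : ‖w‖ ^ k ≤ 1 := pow_le_one₀ (norm_nonneg _) hw
          have h3 := mul_le_mul (mul_le_mul h1 (le_refl ‖d (k + 1)‖)
            (norm_nonneg (d (k + 1))) zero_le_one) h2 (by positivity) (by positivity)
          simpa using h3
        · have := dtend.comp (tendsto_add_atTop_nat 1)
          simpa [Function.comp_def] using this
      have hder : ∀ w : K, ‖w‖ ≤ 1 →
          HasSum (fun k : ℕ => ((k : K) + 1) * d (k + 1) * w ^ k)
            (g m w / (1 + (p : K) * w)) := by
        intro w hw
        have hD := (Dsummable w hw).hasSum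
        have h1 := hasDerivAt_of_series na hA0 hA dS hw hD
        have h2 := hode m hm1 w hw
        rw [h1.unique h2] at hD
        exact hD
      have h1pw0 : ∀ w : K, ‖w‖ ≤ 1 → (1 + (p : K) * w) ≠ 0 := by
        intro w hw
        have hb : ‖(p : K) * w‖ < ‖(1 : K)‖ := by
          rw [norm_one, norm_mul]
          calc ‖(p : K)‖ * ‖w‖ ≤ ‖(p : K)‖ * 1 := mul_le_mul_of_nonneg_left hw (norm_nonneg _)
            _ = ‖(p : K)‖ := mul_one _
            _ < 1 := hpnorm
        have h1 : ‖1 + (p : K) * w‖ = 1 := by rw [na_add_eq na hb, norm_one]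
        intro h0
        rw [h0] at h1
        simp at h1
      have hrec : ∀ k : ℕ, ((k : K) + 1) * d (k + 1) = a k - (p : K) * k * d k := by
        have hE : ∀ w : K, ‖w‖ ≤ 1 → HasSum
            (fun k : ℕ => (((k : K) + 1) * d (k + 1) + (p : K) * k * d k - a k) * w ^ k) 0 := by
          intro w hw
          have T1 := hder w hw
          have T2a := T1.mul_left ((p : K) * w)
          set f2 : ℕ → K := fun k : ℕ => (p : K) * (k : K) * d k * w ^ k with hf2
          have T2shift : HasSum (fun k : ℕ => f2 (k + 1))
              ((p : K) * w * (g m w / (1 + (p : K) * w))) := by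
            refine T2a.congr_fun fun k => ?_
            simp only [hf2]
            push_cast
            ring
          have T2 : HasSum f2 ((p : K) * w * (g m w / (1 + (p : K) * w))) := by
            have := (hasSum_nat_add_iff (f := f2) 1).mp T2shift
            simpa [hf2] using this
          have T3 := T1.add T2
          have hval : g m w / (1 + (p : K) * w)
              + (p : K) * w * (g m w / (1 + (p : K) * w)) = g m w := by
            have hne := h1pw0 w hw
            field_simp
          rw [hval] at T3
          have T5 := T3.sub (aS w hw)
          rw [sub_self] at T5
          refine T5.congr_fun fun k => ?_
          simp only [hf2]
          ring
        intro k
        have := coeff_eq_zero na hE k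
        linear_combination this
      have hd0 : d 0 = c (m + 1) := by
        have S0 := dS 0 (by simp)
        have hsingle : HasSum (fun k : ℕ => d k * (0 : K) ^ k) (d 0 * (0 : K) ^ 0) :=
          hasSum_single 0 (fun b hb => by rw [zero_pow hb, mul_zero])
        have h1 := hsingle.unique S0
        rw [pow_zero, mul_one] at h1
        rw [h1]
        exact hinit (m + 1) hm1
      have hfac1 : ∀ k, k ≤ n → ‖((k.factorial : ℕ) : K)‖ = 1 := fun k hk =>
        norm_fact_lt na hp hpnorm (by omega)
      have Q : ∀ k, k ≤ m + 1 → ‖d k - c (m + 1 - k) / ((k.factorial : ℕ) : K)‖ ≤ ‖(p : K)‖ := by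
        intro k
        induction k with
        | zero =>
          intro _
          rw [Nat.sub_zero, Nat.factorial_zero, Nat.cast_one, div_one, hd0, sub_self, norm_zero]
          exact hρ0.le
        | succ k ihk =>
          intro hk1
          have hkm : k ≤ m := by omega
          have hQk := ihk (by omega)
          have hdk : ‖d k‖ ≤ 1 := by
            have h2 : ‖c (m + 1 - k) / ((k.factorial : ℕ) : K)‖ ≤ 1 := by
              rw [norm_div, hfac1 k (by omega), div_one]
              exact hc _
            have hsplit : d k = (d k - c (m + 1 - k) / ((k.factorial : ℕ) : K))
                + c (m + 1 - k) / ((k.factorial : ℕ) : K) := by ring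
            rw [hsplit]
            exact le_trans (naB _ _) (max_le (le_trans hQk hpnorm.le) h2)
          have hk1norm : ‖(k : K) + 1‖ = 1 := by
            have := norm_coprime_nat (j := k + 1) na hp hpnorm (by omega) (Nat.succ_pos k)
            push_cast at this
            exact this
          have hfacK : ((k.factorial : ℕ) : K) ≠ 0 := Nat.cast_ne_zero.mpr k.factorial_ne_zero
          have hk1K : ((k : K) + 1) ≠ 0 := by
            have h0 : (((k + 1 : ℕ)) : K) ≠ 0 := Nat.cast_ne_zero.mpr (Nat.succ_ne_zero k)
            push_cast at h0
            exact h0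
          have hfacK1 : (((k + 1).factorial : ℕ) : K) = ((k : K) + 1) * ((k.factorial : ℕ) : K) := by
            rw [Nat.factorial_succ]
            push_cast
            ring
          have hsub : m + 1 - (k + 1) = m - k := by omega
          have hmain : ((k : K) + 1) * (d (k + 1) - c (m - k) / (((k + 1).factorial : ℕ) : K))
              = (a k - c (m - k) / ((k.factorial : ℕ) : K)) - (p : K) * k * d k := by
            rw [mul_sub, hrec k, hfacK1]
            field_simp
            ring
          have hnorm : ‖d (k + 1) - c (m + 1 - (k + 1)) / (((k + 1).factorial : ℕ) : K)‖
              = ‖((k : K) + 1) * (d (k + 1) - c (m - k) / (((k + 1).factorial : ℕ) : K))‖ := by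
            rw [norm_mul, hk1norm, one_mul, hsub]
          rw [hnorm, hmain]
          refine le_trans (naSub _ _) (max_le (ai k hkm) ?_)
          rw [norm_mul, norm_mul]
          have h4 := mul_le_mul (mul_le_mul (le_refl ‖(p : K)‖) (na_nat na k)
            (norm_nonneg _) hρ0.le) hdk (norm_nonneg _) (by positivity)
          simpa using h4
      have hdm1 : ‖d (m + 1)‖ ≤ 1 := by
        have hQ := Q (m + 1) le_rfl
        have h2 : ‖c (m + 1 - (m + 1)) / (((m + 1).factorial : ℕ) : K)‖ ≤ 1 := by
          rw [norm_div, hfac1 (m + 1) hm1, div_one]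
          exact hc _
        have hsplit : d (m + 1) = (d (m + 1) - c (m + 1 - (m + 1)) / (((m + 1).factorial : ℕ) : K))
            + c (m + 1 - (m + 1)) / (((m + 1).factorial : ℕ) : K) := by ring
        rw [hsplit]
        exact le_trans (naB _ _) (max_le (le_trans hQ hpnorm.le) h2)
      have R : ∀ k, m + 1 ≤ k → ‖((k.factorial : ℕ) : K) * d k‖ ≤ ‖(p : K)‖ ^ (k - (m + 1)) := by
        intro k hk
        induction k, hk using Nat.le_induction with
        | base =>
          rw [Nat.sub_self, pow_zero, norm_mul, hfac1 (m + 1) hm1, one_mul]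
          exact hdm1
        | succ k hk ihk =>
          have hfacK1 : (((k + 1).factorial : ℕ) : K) = ((k : K) + 1) * ((k.factorial : ℕ) : K) := by
            rw [Nat.factorial_succ]
            push_cast
            ring
          have hmain : (((k + 1).factorial : ℕ) : K) * d (k + 1)
              = ((k.factorial : ℕ) : K) * a k
                - (p : K) * ((k : K) * (((k.factorial : ℕ) : K) * d k)) := by
            rw [hfacK1, mul_comm ((k : K) + 1) ((k.factorial : ℕ) : K), mul_assoc, hrec k]
            ring
          rw [hmain]
          have hsub2 : k + 1 - (m + 1) = k - m := by omega
          have hsub3 : (k - (m + 1)) + 1 = k - m := by omega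
          refine le_trans (naSub _ _) (max_le ?_ ?_)
          · rw [hsub2]
            exact aii k (by omega)
          · rw [norm_mul, norm_mul]
            calc ‖(p : K)‖ * (‖(k : K)‖ * ‖((k.factorial : ℕ) : K) * d k‖)
                ≤ ‖(p : K)‖ * (1 * ‖(p : K)‖ ^ (k - (m + 1))) := by
                  refine mul_le_mul_of_nonneg_left ?_ hρ0.le
                  refine mul_le_mul (na_nat na k) ihk (norm_nonneg _) zero_le_one
              _ = ‖(p : K)‖ ^ ((k - (m + 1)) + 1) := by rw [pow_succ]; ring
              _ = ‖(p : K)‖ ^ (k + 1 - (m + 1)) := by rw [hsub3, hsub2]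
      exact ⟨d, dS, Q, R⟩
  -- conclusion
  intro m hm w hw
  obtain ⟨a, hS, hi, hii⟩ := key m hm
  have hfin : HasSum (fun k => (if k < m + 1 then c (m - k) / (k.factorial : K) else 0) * w ^ k)
      (∑ k ∈ Finset.range (m + 1), c (m - k) / (k.factorial : K) * w ^ k) := by
    have h0 : ∀ b ∉ Finset.range (m + 1),
        (if b < m + 1 then c (m - b) / (b.factorial : K) else 0) * w ^ b = 0 := by
      intro b hb
      rw [if_neg (by simpa using hb)]
      ring
    have h1 : HasSum _ _ := hasSum_sum_of_ne_finset_zero h0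
    have heq : ∑ b ∈ Finset.range (m + 1),
        (if b < m + 1 then c (m - b) / (b.factorial : K) else 0) * w ^ b
        = ∑ k ∈ Finset.range (m + 1), c (m - k) / (k.factorial : K) * w ^ k :=
      Finset.sum_congr rfl fun b hb => by rw [if_pos (Finset.mem_range.mp hb)]
    rw [heq] at h1
    exact h1
  have hdiff := (hS w hw).sub hfin
  have hsum_eq : ∑ k ∈ Finset.range (m + 1), c (m - k) * w ^ k / (k.factorial : K)
      = ∑ k ∈ Finset.range (m + 1), c (m - k) / (k.factorial : K) * w ^ k := by
    refine Finset.sum_congr rfl fun k _ => ?_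
    ring
  rw [hsum_eq]
  refine na_hasSum na hρ0.le hdiff fun k => ?_
  rcases lt_or_ge k (m + 1) with hk | hk
  · rw [if_pos hk]
    have : a k * w ^ k - c (m - k) / (k.factorial : K) * w ^ k
        = (a k - c (m - k) / (k.factorial : K)) * w ^ k := by ring
    rw [this, norm_mul, norm_pow]
    calc ‖a k - c (m - k) / (k.factorial : K)‖ * ‖w‖ ^ k ≤ ‖(p : K)‖ * 1 :=
        mul_le_mul (hi k (by omega)) (pow_le_one₀ (norm_nonneg _) hw)
          (by positivity) hρ0.le
      _ = ‖(p : K)‖ := mul_one _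
  · have hmk : m + 1 ≤ k := hk
    have hak : ‖a k‖ ≤ ‖(p : K)‖ := by
      have h1 := hii k (by omega)
      rw [norm_mul, norm_factorial na hp hpnorm k] at h1
      set v := padicValNat p k.factorial with hv
      have hvb : v + m + 1 ≤ k := padic_fact_bound hp (by omega) hmk
      have hsplit : ‖(p : K)‖ ^ (k - m) = ‖(p : K)‖ ^ v * ‖(p : K)‖ ^ (k - m - v) := by
        rw [← pow_add]
        congr 1
        omega
      rw [hsplit] at h1
      have h2 : ‖a k‖ ≤ ‖(p : K)‖ ^ (k - m - v) :=
        le_of_mul_le_mul_left (by linarith [h1]) (by positivity : (0:ℝ) < ‖(p:K)‖ ^ v)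
      refine le_trans h2 ?_
      calc ‖(p : K)‖ ^ (k - m - v) ≤ ‖(p : K)‖ ^ 1 :=
        pow_le_pow_of_le_one hρ0.le hpnorm.le (by omega)
      _ = ‖(p : K)‖ := pow_one _
    rw [if_neg (by omega : ¬ k < m + 1), zero_mul, sub_zero, norm_mul, norm_pow]
    calc ‖a k‖ * ‖w‖ ^ k ≤ ‖(p : K)‖ * 1 :=
        mul_le_mul hak (pow_le_one₀ (norm_nonneg _) hw) (by positivity) hρ0.le
      _ = ‖(p : K)‖ := mul_one _
end
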